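/- Let a ≥ 2 and let M₁, …, M_a ⊆ M₀ be pairwise disjoint, finite, nonempty, simple and bound sets such that Θ(Mᵢ, M̃ᵢ) = Θ(Mᵢ, Mᵢ₊₁) for every i ∈ {1, …, a−1}, and such that Ξ(M₁) ≥ Ξ(Mⱼ) for all j ∈ {2, …, a−1}. If in addition Ξ(M_a) ≥ Ξ(M₁) (inequalities in (0, +∞]), then U(M₁) ≥ U(M_a) and Θ(M₁, M̃₁) = Θ(M₁, M_a). -/

import Mathlib

open Set Filter Metric
open scoped RealInnerProductSpace

noncomputable section

/-- Euclidean space `ℝ^d`. -/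
abbrev Eucl (d : ℕ) : Type := EuclideanSpace ℝ (Fin d)

/-- The communication height `Θ(x, y)` between two points. -/
def commHeight {d : ℕ} (U : Eucl d → ℝ) (x y : Eucl d) : ℝ :=
  ⨅ γ : Path x y, ⨆ t : unitInterval, U (γ t)

/-- The communication height `Θ(A, B)` between two sets, `+∞` if one is empty. -/
def commHeightSet {d : ℕ} (U : Eucl d → ℝ) (A B : Set (Eucl d)) : EReal :=
  ⨅ x ∈ A, ⨅ y ∈ B, (commHeight U x y : EReal)

/-- `M̃`: the local minima of `U` outside `M` of height at most `c = U(M)`. -/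
def tildeSet {d : ℕ} (U : Eucl d → ℝ) (M : Set (Eucl d)) (c : ℝ) : Set (Eucl d) :=
  {m' | IsLocalMin U m' ∧ m' ∉ M ∧ U m' ≤ c}

/-- `Ξ(M) = Θ(M, M̃) − U(M) ∈ (0, ∞]`. -/
def XiSet {d : ℕ} (U : Eucl d → ℝ) (M : Set (Eucl d)) (c : ℝ) : EReal :=
  commHeightSet U M (tildeSet U M c) - (c : EReal)

/-- `M` (simple, common value `c`) is bound. -/
def IsBound {d : ℕ} (U : Eucl d → ℝ) (M : Set (Eucl d)) (c : ℝ) : Prop :=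
  (∃ m, M = {m}) ∨
    ∀ m ∈ M, ∀ m' ∈ M, (commHeight U m m' : EReal) < commHeightSet U M (tildeSet U M c)

/-- `A` is a connected component of `S`. -/
def IsCompOf {d : ℕ} (S A : Set (Eucl d)) : Prop :=
  ∃ x ∈ S, A = connectedComponentIn S x

/-- The Hessian matrix of `U` at `x`. -/
def hessMat {d : ℕ} (U : Eucl d → ℝ) (x : Eucl d) : Matrix (Fin d) (Fin d) ℝ :=
  Matrix.of fun i j =>
    iteratedFDeriv ℝ 2 U x ![EuclideanSpace.single i (1 : ℝ), EuclideanSpace.single j (1 : ℝ)]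

/-- `σ` is a saddle point of `U`. -/
def IsSaddle {d : ℕ} (U : Eucl d → ℝ) (σ : Eucl d) : Prop :=
  gradient U σ = 0 ∧
    ∃ hH : (hessMat U σ).IsHermitian,
      IsUnit (hessMat U σ).det ∧ ∃! i, hH.eigenvalues i < 0

/-- `x ↷ y` : heteroclinic orbit of `ẋ = b(x)` from `x` to `y`. -/
def Hetero {d : ℕ} (b : Eucl d → Eucl d) (x y : Eucl d) : Prop :=
  ∃ φ : ℝ → Eucl d,
    (∀ t, HasDerivAt φ (b (φ t)) t) ∧
      Tendsto φ atBot (nhds x) ∧ Tendsto φ atTop (nhds y)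

/-- `σ ↝ m`. -/
def ConnectsTo {d : ℕ} (U : Eucl d → ℝ) (b : Eucl d → Eucl d) (σ m : Eucl d) : Prop :=
  Hetero b σ m ∨
    ∃ (k : ℕ) (_ : 0 < k) (σs : Fin k → Eucl d) (ms : Fin (k + 1) → Eucl d),
      (∀ i, IsSaddle U (σs i)) ∧ (∀ i, U (σs i) < U σ) ∧
        (∀ i : Fin k, IsLocalMin U (ms i.castSucc)) ∧
        ms (Fin.last k) = m ∧ Hetero b σ (ms 0) ∧
        ∀ i : Fin k, Hetero b (σs i) (ms i.castSucc) ∧ Hetero b (σs i) (ms i.succ)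

/-- `σ ↝ M`. -/
def ConnectsToSet {d : ℕ} (U : Eucl d → ℝ) (b : Eucl d → Eucl d) (σ : Eucl d)
    (M : Set (Eucl d)) : Prop :=
  ∃ m ∈ M, ConnectsTo U b σ m

/-- `σ ↷ M`. -/
def HeteroToSet {d : ℕ} (b : Eucl d → Eucl d) (σ : Eucl d) (M : Set (Eucl d)) : Prop :=
  ∃ m ∈ M, Hetero b σ m

/-- `M →_σ M'`. -/
def AdjacentVia {d : ℕ} (U : Eucl d → ℝ) (b : Eucl d → Eucl d) (M M' : Set (Eucl d))
    (c : ℝ) (σ : Eucl d) : Prop :=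
  IsSaddle U σ ∧ ConnectsToSet U b σ M ∧ HeteroToSet b σ M' ∧
    (U σ : EReal) = commHeightSet U M (tildeSet U M c) ∧
    (U σ : EReal) = commHeightSet U M M'

/-- Unstable-manifold property. -/
def UnstableManifoldProperty {d : ℕ} (U : Eucl d → ℝ) (b : Eucl d → Eucl d) : Prop :=
  ∀ σ : Eucl d, IsSaddle U σ →
    ∃ r' > (0 : ℝ), ∃ Ap Am : Set (Eucl d),
      Ap ≠ Am ∧
      IsCompOf (ball σ r' ∩ {x | U x < U σ}) Ap ∧
      IsCompOf (ball σ r' ∩ {x | U x < U σ}) Am ∧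
      (∀ C, IsCompOf (ball σ r' ∩ {x | U x < U σ}) C → C = Ap ∨ C = Am) ∧
      ∃ mp mm : Eucl d, IsLocalMin U mp ∧ IsLocalMin U mm ∧
        ∃ tp tm : ℝ, ∃ φp φm : ℝ → Eucl d,
          (∀ t, HasDerivAt φp (b (φp t)) t) ∧ (∀ t, HasDerivAt φm (b (φm t)) t) ∧
          Tendsto φp atBot (nhds σ) ∧ Tendsto φp atTop (nhds mp) ∧
          Tendsto φm atBot (nhds σ) ∧ Tendsto φm atTop (nhds mm) ∧
          φp '' Iic tp ⊆ Ap ∧ φm '' Iic tm ⊆ Am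

instance euclPathConn {d : ℕ} : PathConnectedSpace (Eucl d) :=
  IsTopologicalAddGroup.pathConnectedSpace
instance pathNonempty {d : ℕ} (x y : Eucl d) : Nonempty (Path x y) :=
  ⟨PathConnectedSpace.somePath x y⟩

variable {d : ℕ} {U : Eucl d → ℝ}

lemma bddAbove_pathSup (hUc : Continuous U) {x y : Eucl d} (γ : Path x y) :
    BddAbove (Set.range fun t => U (γ t)) :=
  (isCompact_range (hUc.comp γ.continuous)).bddAbove

lemma left_le_sup (hUc : Continuous U) {x y : Eucl d} (γ : Path x y) :
    U x ≤ ⨆ t, U (γ t) := by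
  have := le_ciSup (bddAbove_pathSup hUc γ) (0 : unitInterval)
  simpa using this

lemma bddBelow_heights (hUc : Continuous U) (x y : Eucl d) :
    BddBelow (Set.range fun γ : Path x y => ⨆ t, U (γ t)) := by
  refine ⟨U x, ?_⟩
  rintro _ ⟨γ, rfl⟩
  exact left_le_sup hUc γ

lemma left_le_commHeight (hUc : Continuous U) (x y : Eucl d) :
    U x ≤ commHeight U x y :=
  le_ciInf fun γ => left_le_sup hUc γ

lemma sup_path_symm {x y : Eucl d} (γ : Path x y) :
    (⨆ t, U (γ.symm t)) = ⨆ t, U (γ t) := by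
  have hsurj : Function.Surjective unitInterval.symm := fun t =>
    ⟨unitInterval.symm t, unitInterval.symm_symm t⟩
  have hr : (Set.range fun t => U (γ.symm t)) = Set.range fun t => U (γ t) := by
    have : (fun t => U (γ.symm t)) = (fun t => U (γ t)) ∘ unitInterval.symm := by
      funext t; simp [Path.symm_apply]
    rw [this, hsurj.range_comp]
  rw [iSup, iSup, hr]

lemma commHeight_symm (hUc : Continuous U) (x y : Eucl d) :
    commHeight U x y = commHeight U y x := by
  have key : ∀ u v : Eucl d, commHeight U u v ≤ commHeight U v u := by
    intro u v
    refine le_ciInf fun γ => ?_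
    calc commHeight U u v ≤ ⨆ t, U (γ.symm t) := ciInf_le (bddBelow_heights hUc u v) γ.symm
    _ = ⨆ t, U (γ t) := sup_path_symm γ
  exact le_antisymm (key x y) (key y x)

lemma commHeight_refl_le (hUc : Continuous U) (m : Eucl d) :
    commHeight U m m ≤ U m := by
  have : commHeight U m m ≤ ⨆ t, U ((Path.refl m) t) :=
    ciInf_le (bddBelow_heights hUc m m) (Path.refl m)
  simpa [ciSup_const] using this

lemma commHeight_triangle (hUc : Continuous U) (x y z : Eucl d) :
    commHeight U x z ≤ max (commHeight U x y) (commHeight U y z) := by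
  refine le_of_forall_gt_imp_ge_of_dense fun c hc => ?_
  have h1 : (⨅ γ : Path x y, ⨆ t, U (γ t)) < c :=
    lt_of_le_of_lt (le_max_left _ (commHeight U y z)) hc
  have h2 : (⨅ γ : Path y z, ⨆ t, U (γ t)) < c :=
    lt_of_le_of_lt (le_max_right (commHeight U x y) _) hc
  obtain ⟨γ, hγ⟩ := exists_lt_of_ciInf_lt h1
  obtain ⟨δ, hδ⟩ := exists_lt_of_ciInf_lt h2
  have ha : commHeight U x z ≤ ⨆ t, U ((γ.trans δ) t) :=
    ciInf_le (bddBelow_heights hUc x z) (γ.trans δ)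
  have hb : (⨆ t, U ((γ.trans δ) t)) ≤ max (⨆ t, U (γ t)) (⨆ t, U (δ t)) := by
    refine ciSup_le fun t => ?_
    have hmem : (γ.trans δ) t ∈ Set.range γ ∪ Set.range δ := by
      rw [← Path.trans_range]; exact Set.mem_range_self t
    rcases hmem with ⟨s, hs⟩ | ⟨s, hs⟩
    · exact le_max_of_le_left (hs ▸ le_ciSup (bddAbove_pathSup hUc γ) s)
    · exact le_max_of_le_right (hs ▸ le_ciSup (bddAbove_pathSup hUc δ) s)
  exact (ha.trans (hb.trans (max_le hγ.le hδ.le)))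

lemma commHeightSet_le_commHeight {A B : Set (Eucl d)} {x y : Eucl d}
    (hx : x ∈ A) (hy : y ∈ B) :
    commHeightSet U A B ≤ (commHeight U x y : EReal) :=
  iInf₂_le_of_le x hx (iInf₂_le y hy)

lemma le_commHeightSet {A B : Set (Eucl d)} {c : EReal}
    (h : ∀ x ∈ A, ∀ y ∈ B, c ≤ (commHeight U x y : EReal)) :
    c ≤ commHeightSet U A B :=
  le_iInf₂ fun x hx => le_iInf₂ fun y hy => h x hx y hy

lemma commHeightSet_anti {A B B' : Set (Eucl d)} (h : B ⊆ B') :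
    commHeightSet U A B' ≤ commHeightSet U A B :=
  le_iInf₂ fun x hx => le_iInf₂ fun y hy => commHeightSet_le_commHeight hx (h hy)

lemma commHeightSet_symm (hUc : Continuous U) (A B : Set (Eucl d)) :
    commHeightSet U A B = commHeightSet U B A := by
  have key : ∀ A B : Set (Eucl d), commHeightSet U A B ≤ commHeightSet U B A := by
    intro A B
    refine le_iInf₂ fun y hy => le_iInf₂ fun x hx => ?_
    have := commHeightSet_le_commHeight (U := U) hx hy
    rwa [commHeight_symm hUc x y] at this
  exact le_antisymm (key A B) (key B A)

lemma commHeightSet_triangle (hUc : Continuous U) {A B C : Set (Eucl d)} {K : EReal}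
    (hAB : commHeightSet U A B ≤ K) (hBC : commHeightSet U B C ≤ K)
    (hintra : ∀ b ∈ B, ∀ b' ∈ B, (commHeight U b b' : EReal) ≤ K) :
    commHeightSet U A C ≤ K := by
  refine le_of_forall_gt_imp_ge_of_dense fun e he => ?_
  have h1 : commHeightSet U A B < e := hAB.trans_lt he
  have h2 : commHeightSet U B C < e := hBC.trans_lt he
  rw [commHeightSet] at h1 h2
  simp only [iInf_lt_iff, exists_prop] at h1 h2
  obtain ⟨a, ha, b, hb, hab⟩ := h1
  obtain ⟨b', hb', c, hc, hbc⟩ := h2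
  have tri : commHeight U a c ≤
      max (commHeight U a b) (max (commHeight U b b') (commHeight U b' c)) :=
    (commHeight_triangle hUc a b c).trans
      (max_le_max le_rfl (commHeight_triangle hUc b b' c))
  have h3 : (commHeight U b b' : EReal) ≤ e := (hintra b hb b' hb').trans he.le
  have hfin : (commHeight U a c : EReal) ≤ e := by
    rcases le_max_iff.1 tri with h | h
    · exact le_trans (EReal.coe_le_coe_iff.2 h) hab.le
    rcases le_max_iff.1 h with h' | h'
    · exact le_trans (EReal.coe_le_coe_iff.2 h') h3
    · exact le_trans (EReal.coe_le_coe_iff.2 h') hbc.le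
  exact (commHeightSet_le_commHeight ha hc).trans hfin


theorem statement6 {d : ℕ} (hd : 1 ≤ d)
    (U : Eucl d → ℝ) (hUc : Continuous U)
    (a : ℕ) (ha : 2 ≤ a)
    (ms : Fin a → Set (Eucl d)) (cs : Fin a → ℝ)
    (hdisj : ∀ i j, i ≠ j → Disjoint (ms i) (ms j))
    (hfin : ∀ i, (ms i).Finite) (hne : ∀ i, (ms i).Nonempty)
    (hloc : ∀ i, ∀ m ∈ ms i, IsLocalMin U m)
    (hsimple : ∀ i, ∀ m ∈ ms i, U m = cs i)
    (hbound : ∀ i, IsBound U (ms i) (cs i))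
    (hadj : ∀ i : Fin a, (hia : i.1 + 1 < a) →
      commHeightSet U (ms i) (tildeSet U (ms i) (cs i)) =
        commHeightSet U (ms i) (ms ⟨i.1 + 1, hia⟩))
    (hXi : ∀ j : Fin a, 1 ≤ j.1 → j.1 + 1 < a →
      XiSet U (ms j) (cs j) ≤ XiSet U (ms ⟨0, by omega⟩) (cs ⟨0, by omega⟩))
    (hXia : XiSet U (ms ⟨0, by omega⟩) (cs ⟨0, by omega⟩) ≤
      XiSet U (ms ⟨a - 1, by omega⟩) (cs ⟨a - 1, by omega⟩)) :
    cs ⟨a - 1, by omega⟩ ≤ cs ⟨0, by omega⟩ ∧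
      commHeightSet U (ms ⟨0, by omega⟩)
          (tildeSet U (ms ⟨0, by omega⟩) (cs ⟨0, by omega⟩)) =
        commHeightSet U (ms ⟨0, by omega⟩) (ms ⟨a - 1, by omega⟩) := by
  have h0a : 0 < a := by omega
  have ha1 : a - 1 < a := by omega
  set i0 : Fin a := ⟨0, h0a⟩ with hi0def
  set ia : Fin a := ⟨a - 1, ha1⟩ with hiadef
  set Θ : Fin a → EReal :=
    fun i => commHeightSet U (ms i) (tildeSet U (ms i) (cs i)) with hΘdef
  -- the common value of U on ms i is a lower bound for Θ i
  have hcsΘ : ∀ i, (cs i : EReal) ≤ Θ i := by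
    intro i
    refine le_commHeightSet fun x hx y _ => ?_
    have : cs i ≤ commHeight U x y := by
      rw [← hsimple i x hx]; exact left_le_commHeight hUc x y
    exact EReal.coe_le_coe_iff.2 this
  -- intra-set communication heights are bounded by Θ i
  have hintra : ∀ i, ∀ b ∈ ms i, ∀ b' ∈ ms i,
      (commHeight U b b' : EReal) ≤ Θ i := by
    intro i b hb b' hb'
    have hbi : (∃ m, ms i = {m}) ∨
        ∀ m ∈ ms i, ∀ m' ∈ ms i, (commHeight U m m' : EReal) <
          commHeightSet U (ms i) (tildeSet U (ms i) (cs i)) := hbound i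
    rcases hbi with ⟨m, hm⟩ | hlt
    · rw [hm, Set.mem_singleton_iff] at hb hb'
      rw [hb, hb']
      refine le_trans ?_ (hcsΘ i)
      have : commHeight U m m ≤ cs i := by
        have h1 := commHeight_refl_le hUc m
        rwa [hsimple i m (by rw [hm]; exact Set.mem_singleton m)] at h1
      exact EReal.coe_le_coe_iff.2 this
    · exact (hlt b hb b' hb').le
  -- subset lemma : if cs i ≤ cs j and i ≠ j then ms i ⊆ tildeSet of ms j
  have hsub : ∀ i j : Fin a, i ≠ j → cs i ≤ cs j →
      ms i ⊆ tildeSet U (ms j) (cs j) := by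
    intro i j hij hcij m hm
    refine ⟨hloc i m hm, fun hmem => ?_, by rw [hsimple i m hm]; exact hcij⟩
    exact Set.disjoint_left.mp (hdisj i j hij) hm hmem
  -- main induction : Θ(M₀, M_j) ≤ Θ₀ for 1 ≤ j ≤ a - 1
  have claim : ∀ j : ℕ, 1 ≤ j → ∀ hja : j < a,
      commHeightSet U (ms i0) (ms ⟨j, hja⟩) ≤ Θ i0 := by
    intro j
    induction j with
    | zero => omega
    | succ n ih =>
      intro h1 hja
      rcases Nat.lt_or_ge 1 (n + 1) with h | h
      pick_goal 2
      · -- n = 0 : base case from hadj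
        have hn0 : n = 0 := by omega
        subst hn0
        exact le_of_eq (hadj i0 (show (0:ℕ) + 1 < a by omega)).symm
      · -- n ≥ 1
        have hn1 : 1 ≤ n := by omega
        have hna : n < a := by omega
        have ihn := ih hn1 hna
        set jF : Fin a := ⟨n, hna⟩ with hjFdef
        have hΘj : Θ jF ≤ Θ i0 := by
          rcases le_total (cs jF) (cs i0) with hle | hle
          · have hXij : Θ jF - (cs jF : EReal) ≤ Θ i0 - (cs i0 : EReal) :=
              hXi jF hn1 hja
            calc Θ jF = (Θ jF - (cs jF : EReal)) + (cs jF : EReal) :=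
                  EReal.sub_add_cancel.symm
            _ ≤ (Θ i0 - (cs i0 : EReal)) + (cs jF : EReal) :=
                  add_le_add hXij le_rfl
            _ ≤ (Θ i0 - (cs i0 : EReal)) + (cs i0 : EReal) :=
                  add_le_add le_rfl (EReal.coe_le_coe_iff.2 hle)
            _ = Θ i0 := EReal.sub_add_cancel
          · have h0j : i0 ≠ jF := by
              simp only [hi0def, hjFdef, ne_eq, Fin.mk.injEq]; omega
            calc Θ jF ≤ commHeightSet U (ms jF) (ms i0) :=
                  commHeightSet_anti (hsub i0 jF h0j hle)
            _ = commHeightSet U (ms i0) (ms jF) := commHeightSet_symm hUc _ _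
            _ ≤ Θ i0 := ihn
        have hadj' : Θ jF = commHeightSet U (ms jF) (ms ⟨n + 1, hja⟩) :=
          hadj jF hja
        refine commHeightSet_triangle hUc (B := ms jF) ihn ?_ ?_
        · rw [← hadj']; exact hΘj
        · intro b hb b' hb'; exact (hintra jF b hb b' hb').trans hΘj
  have hΓ : commHeightSet U (ms i0) (ms ia) ≤ Θ i0 :=
    claim (a - 1) (by omega) ha1
  set Γ : EReal := commHeightSet U (ms i0) (ms ia) with hΓdef
  have h0a1 : i0 ≠ ia := by
    simp only [hi0def, hiadef, ne_eq, Fin.mk.injEq]; omega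
  -- Γ is finite
  obtain ⟨x0, hx0⟩ := hne i0
  obtain ⟨ya, hya⟩ := hne ia
  have hΓtop : Γ ≠ ⊤ := by
    refine ne_top_of_le_ne_top ?_ (commHeightSet_le_commHeight hx0 hya)
    exact EReal.coe_ne_top _
  have hΓbot : Γ ≠ ⊥ := by
    refine ne_bot_of_le_ne_bot (EReal.coe_ne_bot (cs i0)) ?_
    refine le_commHeightSet fun x hx y _ => ?_
    refine EReal.coe_le_coe_iff.2 ?_
    rw [← hsimple i0 x hx]; exact left_le_commHeight hUc x y
  obtain ⟨g, hg⟩ : ∃ g : ℝ, Γ = (g : EReal) :=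
    ⟨Γ.toReal, (EReal.coe_toReal hΓtop hΓbot).symm⟩
  -- first conclusion
  have part1 : cs ia ≤ cs i0 := by
    by_contra hcon
    push_neg at hcon
    have hΘa : Θ ia ≤ Γ := by
      calc Θ ia ≤ commHeightSet U (ms ia) (ms i0) :=
            commHeightSet_anti (hsub i0 ia h0a1 hcon.le)
      _ = Γ := commHeightSet_symm hUc _ _
    have hchain : Θ ia - (cs ia : EReal) < Θ i0 - (cs i0 : EReal) := by
      calc Θ ia - (cs ia : EReal) ≤ (g : EReal) - (cs ia : EReal) :=
            EReal.sub_le_sub (hΘa.trans hg.le) le_rfl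
      _ = ((g - cs ia : ℝ) : EReal) := (EReal.coe_sub _ _).symm
      _ < ((g - cs i0 : ℝ) : EReal) :=
            EReal.coe_lt_coe_iff.2 (by linarith)
      _ = (g : EReal) - (cs i0 : EReal) := EReal.coe_sub _ _
      _ ≤ Θ i0 - (cs i0 : EReal) := EReal.sub_le_sub (hg ▸ hΓ) le_rfl
    exact absurd (hXia.trans_lt hchain) (lt_irrefl _)
  refine ⟨part1, le_antisymm ?_ hΓ⟩
  exact commHeightSet_anti (hsub ia i0 (Ne.symm h0a1) part1)


end
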